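/- Let f = h + ḡ be a sense-preserving harmonic mapping on 𝔻 with h ∈ S^δ[α] (δ ≥ 0, 0 ≤ α < 1), g(z) = Σ_{n≥1} bₙ zⁿ, dilatation w = g'/h' satisfying |w| < 1, and |b₁| = β. Then for n ≥ 3: |bₙ| ≤ ((1-α)(1-β²)/n) Σ_{k=1}^{n-1} k^{1-δ}/(k-α) + (1-α)β/(n^δ(n-α)). -/

import Mathlib

open Complex Metric

namespace BnAux

/-- Coefficient-wise power series representation on the unit ball gives a
`HasFPowerSeriesOnBall`. -/
lemma rep_hasFPS {f : ℂ → ℂ} {a : ℕ → ℂ}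
    (hf : ∀ z ∈ ball (0 : ℂ) 1, HasSum (fun n : ℕ => a n * z ^ n) (f z)) :
    HasFPowerSeriesOnBall f (FormalMultilinearSeries.ofScalars ℂ a) 0 1 := by
  constructor
  · refine ENNReal.le_of_forall_nnreal_lt (fun r hr => ?_)
    have hrlt : (r : ℝ) < 1 := by exact_mod_cast hr
    have hz : ((r : ℝ) : ℂ) ∈ ball (0 : ℂ) 1 := by
      rw [mem_ball_zero_iff, Complex.norm_real, Real.norm_eq_abs,
        _root_.abs_of_nonneg r.coe_nonneg]
      exact hrlt
    have hs := (hf _ hz).summable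
    have hs' : Summable fun n : ℕ => ‖a n * ((r : ℝ) : ℂ) ^ n‖ :=
      (summable_norm_iff).mpr hs
    refine FormalMultilinearSeries.le_radius_of_summable_norm _ ?_
    have : ∀ n : ℕ, ‖FormalMultilinearSeries.ofScalars ℂ a n‖ * (r : ℝ) ^ n
        = ‖a n * ((r : ℝ) : ℂ) ^ n‖ := by
      intro n
      rw [FormalMultilinearSeries.ofScalars_norm, norm_mul, norm_pow, Complex.norm_real,
        Real.norm_eq_abs, _root_.abs_of_nonneg r.coe_nonneg]
    exact (summable_congr this).mpr hs'
  · exact one_pos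
  · intro y hy
    have hy' : y ∈ ball (0 : ℂ) 1 := by
      have e1 : Metric.eball (0:ℂ) 1 = ball (0:ℂ) 1 := by
        simpa using (Metric.eball_coe (x := (0:ℂ)) (ε := 1))
      rw [e1] at hy; exact hy
    rw [zero_add]
    refine (hf y hy').congr_fun (fun n => ?_)
    rw [FormalMultilinearSeries.ofScalars_apply_eq, smul_eq_mul]

/-- Uniqueness of power series coefficients. -/
lemma rep_unique {f : ℂ → ℂ} {a b : ℕ → ℂ}
    (ha : ∀ z ∈ ball (0 : ℂ) 1, HasSum (fun n : ℕ => a n * z ^ n) (f z))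
    (hb : ∀ z ∈ ball (0 : ℂ) 1, HasSum (fun n : ℕ => b n * z ^ n) (f z)) :
    a = b := by
  have h1 := (rep_hasFPS ha).hasFPowerSeriesAt
  have h2 := (rep_hasFPS hb).hasFPowerSeriesAt
  exact FormalMultilinearSeries.ofScalars_series_injective (𝕜 := ℂ) ℂ
    (h1.eq_formalMultilinearSeries h2)

/-- Taylor coefficients at 0. -/
noncomputable def tc (f : ℂ → ℂ) (n : ℕ) : ℂ := (n.factorial : ℂ)⁻¹ * iteratedDeriv n f 0

lemma tc_zero (f : ℂ → ℂ) : tc f 0 = f 0 := by simp [tc]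

lemma rep_tc {f : ℂ → ℂ} (hf : DifferentiableOn ℂ f (ball (0 : ℂ) 1)) :
    ∀ z ∈ ball (0 : ℂ) 1, HasSum (fun n : ℕ => tc f n * z ^ n) (f z) := by
  intro z hz
  have := Complex.hasSum_taylorSeries_on_ball hf hz
  refine this.congr_fun (fun n => ?_)
  simp only [tc, smul_eq_mul, sub_zero]
  ring

lemma rep_summable {f : ℂ → ℂ} {a : ℕ → ℂ}
    (hf : ∀ z ∈ ball (0 : ℂ) 1, HasSum (fun n : ℕ => a n * z ^ n) (f z))
    {z : ℂ} (hz : z ∈ ball (0 : ℂ) 1) :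
    Summable fun n : ℕ => ‖a n * z ^ n‖ := by
  have hr := (rep_hasFPS hf).r_le
  have hzb : z ∈ Metric.eball (0 : ℂ) (FormalMultilinearSeries.ofScalars ℂ a).radius := by
    refine lt_of_lt_of_le ?_ hr
    have e1 : Metric.eball (0:ℂ) 1 = ball (0:ℂ) 1 := by
      simpa using (Metric.eball_coe (x := (0:ℂ)) (ε := 1))
    show z ∈ Metric.eball (0:ℂ) 1
    rw [e1]; exact hz
  have := (FormalMultilinearSeries.ofScalars ℂ a).summable_norm_apply hzb
  refine (summable_congr (fun n => ?_)).mp this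
  rw [FormalMultilinearSeries.ofScalars_apply_eq, smul_eq_mul]

/-- Cauchy product of two power series representations. -/
lemma rep_mul {f₁ f₂ : ℂ → ℂ} {a₁ a₂ : ℕ → ℂ}
    (h₁ : ∀ z ∈ ball (0 : ℂ) 1, HasSum (fun n : ℕ => a₁ n * z ^ n) (f₁ z))
    (h₂ : ∀ z ∈ ball (0 : ℂ) 1, HasSum (fun n : ℕ => a₂ n * z ^ n) (f₂ z)) :
    ∀ z ∈ ball (0 : ℂ) 1, HasSum
      (fun n : ℕ => (∑ k ∈ Finset.range (n + 1), a₁ k * a₂ (n - k)) * z ^ n)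
      (f₁ z * f₂ z) := by
  intro z hz
  have H := hasSum_sum_range_mul_of_summable_norm (rep_summable h₁ hz) (rep_summable h₂ hz)
  rw [(h₁ z hz).tsum_eq, (h₂ z hz).tsum_eq] at H
  refine H.congr_fun (fun n => ?_)
  rw [Finset.sum_mul]
  refine Finset.sum_congr rfl (fun k hk => ?_)
  have hk' : k ≤ n := Nat.lt_succ_iff.mp (Finset.mem_range.mp hk)
  have : z ^ k * z ^ (n - k) = z ^ n := by
    rw [← pow_add, Nat.add_sub_cancel' hk']
  rw [← this]
  ring

end BnAux

namespace BnAux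

lemma tc_deriv (f : ℂ → ℂ) (n : ℕ) : tc (deriv f) n = ((n : ℂ) + 1) * tc f (n + 1) := by
  simp only [tc, ← iteratedDeriv_succ']
  rw [Nat.factorial_succ]
  push_cast
  have h1 : ((n.factorial : ℂ)) ≠ 0 := by exact_mod_cast Nat.factorial_ne_zero n
  have h2 : ((n : ℂ) + 1) ≠ 0 := Nat.cast_add_one_ne_zero n
  field_simp

/-- Cauchy estimate: coefficients of a map bounded by 1 on the unit ball are at most 1. -/
lemma tc_norm_le {f : ℂ → ℂ} (hd : DifferentiableOn ℂ f (ball (0 : ℂ) 1))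
    (hb : ∀ z ∈ ball (0 : ℂ) 1, ‖f z‖ ≤ 1) (m : ℕ) : ‖tc f m‖ ≤ 1 := by
  have key : ∀ r : ℝ, 0 < r → r < 1 → ‖tc f m‖ * r ^ m ≤ 1 := by
    intro r h0 h1
    set R : NNReal := ⟨r, h0.le⟩ with hR
    have hsub : closedBall (0 : ℂ) r ⊆ ball (0 : ℂ) 1 := closedBall_subset_ball h1
    have hfd : DifferentiableOn ℂ f (closedBall (0 : ℂ) R) := hd.mono hsub
    have hRpos : (0 : NNReal) < R := by exact_mod_cast h0
    have hFPS := hfd.hasFPowerSeriesOnBall hRpos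
    have htay := (rep_hasFPS (rep_tc hd)).hasFPowerSeriesAt
    have hpq := hFPS.hasFPowerSeriesAt.eq_formalMultilinearSeries htay
    -- ‖tc f m‖ = ‖cauchyPowerSeries f 0 r m‖
    have hnorm : ‖tc f m‖ = ‖cauchyPowerSeries f 0 (R : ℝ) m‖ := by
      rw [hpq, FormalMultilinearSeries.ofScalars_norm]
    have hint : ∀ θ : ℝ, θ ∈ Set.uIcc 0 (2 * Real.pi) → ‖f (circleMap 0 r θ)‖ ≤ 1 := by
      intro θ _
      refine hb _ ?_
      simp [mem_ball_zero_iff, norm_circleMap_zero,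
        _root_.abs_of_pos h0, h1]
    have hcont : ContinuousOn (fun θ : ℝ => ‖f (circleMap 0 r θ)‖)
        (Set.uIcc 0 (2 * Real.pi)) := by
      refine ContinuousOn.norm ?_
      refine (hd.continuousOn.comp (continuous_circleMap 0 r).continuousOn ?_)
      intro θ _
      simp [mem_ball_zero_iff, norm_circleMap_zero,
        _root_.abs_of_pos h0, h1]
    have hI : (∫ θ : ℝ in (0)..(2 * Real.pi), ‖f (circleMap 0 r θ)‖) ≤ 2 * Real.pi := by
      have := intervalIntegral.integral_mono_on Real.two_pi_pos.le
        (hcont.intervalIntegrable) (intervalIntegrable_const (c := (1:ℝ))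
          (μ := MeasureTheory.volume))
        (fun θ hθ => hint θ (Set.mem_uIcc_of_le hθ.1 hθ.2))
      simpa using this
    have hest := norm_cauchyPowerSeries_le f 0 (R : ℝ) m
    have habs : |(R : ℝ)| = r := _root_.abs_of_pos h0
    rw [habs] at hest
    have hcoef : ‖tc f m‖ ≤ r⁻¹ ^ m := by
      rw [hnorm]
      refine hest.trans ?_
      have h2pi : (0:ℝ) < (2 * Real.pi)⁻¹ := by positivity
      calc (2 * Real.pi)⁻¹ * (∫ θ : ℝ in (0)..(2 * Real.pi), ‖f (circleMap 0 r θ)‖) * r⁻¹ ^ m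
          ≤ (2 * Real.pi)⁻¹ * (2 * Real.pi) * r⁻¹ ^ m := by
            have : (0:ℝ) ≤ r⁻¹ ^ m := by positivity
            gcongr
        _ = r⁻¹ ^ m := by
            rw [inv_mul_cancel₀ (by positivity : (2 * Real.pi) ≠ 0), one_mul]
    calc ‖tc f m‖ * r ^ m ≤ r⁻¹ ^ m * r ^ m := by
          have : (0:ℝ) ≤ r ^ m := by positivity
          gcongr
      _ = 1 := by
          rw [← mul_pow, inv_mul_cancel₀ h0.ne', one_pow]
  have tlim : Filter.Tendsto (fun r : ℝ => ‖tc f m‖ * r ^ m) (nhdsWithin 1 (Set.Ioo 0 1))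
      (nhds (‖tc f m‖)) := by
    have : Filter.Tendsto (fun r : ℝ => ‖tc f m‖ * r ^ m) (nhds 1) (nhds (‖tc f m‖ * 1 ^ m)) :=
      (continuous_const.mul (continuous_pow m)).tendsto 1
    simpa using this.mono_left nhdsWithin_le_nhds
  have hne : (nhdsWithin (1:ℝ) (Set.Ioo 0 1)).NeBot :=
    right_nhdsWithin_Ioo_neBot one_pos
  exact le_of_tendsto tlim (by
    filter_upwards [self_mem_nhdsWithin] with r hr
    exact key r hr.1 hr.2)

end BnAux

namespace BnAux

lemma mobius_ne {u v : ℂ} (hu : ‖u‖ < 1) (hv : ‖v‖ < 1) :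
    (1 : ℂ) - (starRingEnd ℂ) v * u ≠ 0 := by
  intro hc
  have h1 : (starRingEnd ℂ) v * u = 1 := by linear_combination -hc
  have : ‖(starRingEnd ℂ) v * u‖ < 1 := by
    rw [norm_mul, RCLike.norm_conj]
    calc ‖v‖ * ‖u‖ ≤ 1 * ‖u‖ := by gcongr
      _ < 1 := by simpa using hu
  rw [h1] at this
  simp at this

lemma mobius_lt {u v : ℂ} (hu : ‖u‖ < 1) (hv : ‖v‖ < 1) :
    ‖(u - v) * ((1 : ℂ) - (starRingEnd ℂ) v * u)⁻¹‖ < 1 := by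
  have hne := mobius_ne hu hv
  rw [norm_mul, norm_inv]
  rw [mul_inv_lt_iff₀ (norm_pos_iff.mpr hne), one_mul]
  -- key: ‖u - v‖ < ‖1 - conj v * u‖, via squared identity
  have hC : ((1 : ℂ) - (starRingEnd ℂ) v * u) * (starRingEnd ℂ) ((1 : ℂ) - (starRingEnd ℂ) v * u)
      - (u - v) * (starRingEnd ℂ) (u - v)
      = (1 - u * (starRingEnd ℂ) u) * (1 - v * (starRingEnd ℂ) v) := by
    simp only [map_sub, map_mul, map_one, Complex.conj_conj]
    ring
  have hsq : ∀ z : ℂ, z * (starRingEnd ℂ) z = ((‖z‖^2 : ℝ) : ℂ) := by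
    intro z
    rw [Complex.mul_conj, Complex.normSq_eq_norm_sq]
  rw [hsq, hsq, hsq, hsq] at hC
  have hC' : (‖(1 : ℂ) - (starRingEnd ℂ) v * u‖^2 : ℝ) - ‖u - v‖^2
      = (1 - ‖u‖^2) * (1 - ‖v‖^2) := by exact_mod_cast hC
  have h1 : (0:ℝ) < (1 - ‖u‖^2) * (1 - ‖v‖^2) := by
    have : ‖u‖^2 < 1 := by nlinarith [norm_nonneg u]
    have : ‖v‖^2 < 1 := by nlinarith [norm_nonneg v]
    nlinarith [norm_nonneg u, norm_nonneg v]
  nlinarith [norm_nonneg (u - v), norm_nonneg ((1 : ℂ) - (starRingEnd ℂ) v * u)]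

lemma rootsum (m n : ℕ) (hm : m ≠ 0) :
    (∑ j ∈ Finset.range m, Complex.exp (2 * Real.pi * Complex.I / m) ^ (j * n))
      = if m ∣ n then (m : ℂ) else 0 := by
  have hprim := Complex.isPrimitiveRoot_exp m hm
  set ε := Complex.exp (2 * Real.pi * Complex.I / m) with hε
  have hj : ∀ j : ℕ, ε ^ (j * n) = (ε ^ n) ^ j := by
    intro j; rw [← pow_mul, mul_comm]
  simp only [hj]
  by_cases hdvd : m ∣ n
  · have h1 : ε ^ n = 1 := (hprim.pow_eq_one_iff_dvd n).mpr hdvd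
    simp [h1, hdvd]
  · have hne : ε ^ n ≠ 1 := fun hc => hdvd ((hprim.pow_eq_one_iff_dvd n).mp hc)
    rw [if_neg hdvd, geom_sum_eq hne]
    have : (ε ^ n) ^ m = 1 := by
      rw [← pow_mul, mul_comm, pow_mul, hprim.pow_eq_one, one_pow]
    rw [this]
    simp

end BnAux

namespace BnAux

lemma tc_schwarz_pick {w : ℂ → ℂ} (hw : DifferentiableOn ℂ w (ball (0:ℂ) 1))
    (hwlt : ∀ z ∈ ball (0:ℂ) 1, ‖w z‖ < 1) {m : ℕ} (hm : 1 ≤ m) :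
    ‖tc w m‖ ≤ 1 - ‖w 0‖ ^ 2 := by
  have h0mem : (0:ℂ) ∈ ball (0:ℂ) 1 := mem_ball_self one_pos
  set c₀ := w 0 with hc₀def
  have hc0 : ‖c₀‖ < 1 := hwlt 0 h0mem
  have hmne : m ≠ 0 := by omega
  set ε : ℂ := Complex.exp (2 * Real.pi * Complex.I / m) with hεdef
  have hprim := Complex.isPrimitiveRoot_exp m hmne
  have hεnorm : ‖ε‖ = 1 := by
    have h1 : ‖ε‖ ^ m = 1 := by rw [← norm_pow, hprim.pow_eq_one, norm_one]
    rcases pow_eq_one_iff_cases.mp h1 with h | h | h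
    · omega
    · exact h
    · exfalso; have := h.1; have := norm_nonneg ε; linarith
  set W : ℂ → ℂ := fun z => (m : ℂ)⁻¹ * ∑ j ∈ Finset.range m, w (ε ^ j * z) with hWdef
  have hmapsto : ∀ (j : ℕ) (z : ℂ), z ∈ ball (0:ℂ) 1 → ε ^ j * z ∈ ball (0:ℂ) 1 := by
    intro j z hz
    rw [mem_ball_zero_iff] at hz ⊢
    rw [norm_mul, norm_pow, hεnorm, one_pow, one_mul]
    exact hz
  have hWd : DifferentiableOn ℂ W (ball (0:ℂ) 1) := by
    apply DifferentiableOn.const_mul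
    apply DifferentiableOn.fun_sum
    intro j _
    exact hw.comp ((differentiable_id.const_mul (ε ^ j)).differentiableOn)
      (fun z hz => hmapsto j z hz)
  have hmpos : (0:ℝ) < m := by exact_mod_cast Nat.pos_of_ne_zero hmne
  have hWlt : ∀ z ∈ ball (0:ℂ) 1, ‖W z‖ < 1 := by
    intro z hz
    have hsum : ‖∑ j ∈ Finset.range m, w (ε ^ j * z)‖ < m := by
      calc ‖∑ j ∈ Finset.range m, w (ε ^ j * z)‖
          ≤ ∑ j ∈ Finset.range m, ‖w (ε ^ j * z)‖ := norm_sum_le _ _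
        _ < ∑ _j ∈ Finset.range m, (1:ℝ) := by
            refine Finset.sum_lt_sum_of_nonempty (Finset.nonempty_range_iff.mpr hmne) ?_
            exact fun j _ => hwlt _ (hmapsto j z hz)
        _ = m := by simp
    have : ‖W z‖ = (m:ℝ)⁻¹ * ‖∑ j ∈ Finset.range m, w (ε ^ j * z)‖ := by
      rw [hWdef]
      simp only [norm_mul, norm_inv, Complex.norm_natCast]
    rw [this]
    calc (m:ℝ)⁻¹ * ‖∑ j ∈ Finset.range m, w (ε ^ j * z)‖
        < (m:ℝ)⁻¹ * m := by
          exact mul_lt_mul_of_pos_left hsum (inv_pos.mpr hmpos)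
      _ = 1 := inv_mul_cancel₀ hmpos.ne'
  have hmCne : (m:ℂ) ≠ 0 := Nat.cast_ne_zero.mpr hmne
  have hW0 : W 0 = c₀ := by
    rw [hWdef]
    simp only [mul_zero]
    rw [Finset.sum_const, Finset.card_range, nsmul_eq_mul, ← mul_assoc,
      inv_mul_cancel₀ hmCne, one_mul]
  set C : ℕ → ℂ := fun n => ((m : ℂ)⁻¹ * ∑ j ∈ Finset.range m, ε ^ (j * n)) * tc w n with hCdef
  have hrepW : ∀ z ∈ ball (0:ℂ) 1, HasSum (fun n => C n * z ^ n) (W z) := by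
    intro z hz
    have hj : ∀ j ∈ Finset.range m,
        HasSum (fun n => tc w n * ε ^ (j * n) * z ^ n) (w (ε ^ j * z)) := by
      intro j _
      refine (rep_tc hw _ (hmapsto j z hz)).congr_fun (fun n => ?_)
      rw [mul_pow, ← pow_mul]
      ring
    have hsum := (hasSum_sum hj).mul_left (m:ℂ)⁻¹
    refine hsum.congr_fun (fun n => ?_)
    simp only [hCdef, Finset.mul_sum, Finset.sum_mul]
    refine Finset.sum_congr rfl fun j _ => by ring
  have hC0 : C 0 = c₀ := by
    simp only [hCdef, hεdef]
    rw [rootsum m 0 hmne, if_pos (dvd_zero m), inv_mul_cancel₀ hmCne, one_mul, tc_zero]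
  have hCmid : ∀ n, 0 < n → n < m → C n = 0 := by
    intro n h1 h2
    simp only [hCdef, hεdef]
    rw [rootsum m n hmne,
      if_neg (fun hdvd => absurd (Nat.le_of_dvd h1 hdvd) (not_le.mpr h2))]
    simp
  have hCm : C m = tc w m := by
    simp only [hCdef, hεdef]
    rw [rootsum m m hmne, if_pos dvd_rfl, inv_mul_cancel₀ hmCne, one_mul]
  set D : ℂ → ℂ := fun z => 1 - (starRingEnd ℂ) c₀ * W z with hDdef
  have hDne : ∀ z ∈ ball (0:ℂ) 1, D z ≠ 0 := fun z hz => mobius_ne (hWlt z hz) hc0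
  have hDd : DifferentiableOn ℂ D (ball (0:ℂ) 1) :=
    (differentiableOn_const 1).sub (hWd.const_mul _)
  set Ψ : ℂ → ℂ := fun z => (W z - c₀) * (D z)⁻¹ with hΨdef
  have hΨd : DifferentiableOn ℂ Ψ (ball (0:ℂ) 1) :=
    (hWd.sub (differentiableOn_const c₀)).mul (hDd.inv hDne)
  have hΨlt : ∀ z ∈ ball (0:ℂ) 1, ‖Ψ z‖ < 1 := fun z hz => mobius_lt (hWlt z hz) hc0
  have hrepΨ := rep_tc hΨd
  set ψ := tc Ψ with hψdef
  have hψ0 : ψ 0 = 0 := by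
    rw [hψdef, tc_zero, hΨdef]
    simp [hW0]
  set e : ℕ → ℂ := fun n => (if n = 0 then (1:ℂ) else 0) - (starRingEnd ℂ) c₀ * C n with hedef
  have hone : ∀ (c : ℂ) (z : ℂ), HasSum (fun n : ℕ => (if n = 0 then c else 0) * z ^ n) c := by
    intro c z
    refine (hasSum_ite_eq (0:ℕ) c).congr_fun (fun n => ?_)
    by_cases hn : n = 0 <;> simp [hn]
  have hrepD : ∀ z ∈ ball (0:ℂ) 1, HasSum (fun n => e n * z ^ n) (D z) := by
    intro z hz
    have h2 := (hrepW z hz).mul_left ((starRingEnd ℂ) c₀)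
    have h3 := (hone 1 z).sub h2
    refine h3.congr_fun (fun n => ?_)
    simp only [hedef]
    ring
  have hprod : ∀ z ∈ ball (0:ℂ) 1, Ψ z * D z = W z - c₀ := by
    intro z hz
    rw [hΨdef]
    simp only []
    rw [mul_assoc, inv_mul_cancel₀ (hDne z hz), mul_one]
  set C' : ℕ → ℂ := fun n => C n - (if n = 0 then c₀ else 0) with hC'def
  have hrepWc : ∀ z ∈ ball (0:ℂ) 1, HasSum (fun n => C' n * z^n) (W z - c₀) := by
    intro z hz
    have := (hrepW z hz).sub (hone c₀ z)
    refine this.congr_fun (fun n => ?_)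
    simp only [hC'def]
    ring
  have hconv : ∀ n, (∑ k ∈ Finset.range (n+1), ψ k * e (n - k)) = C' n := by
    have hmulrep : ∀ z ∈ ball (0:ℂ) 1, HasSum
        (fun n => (∑ k ∈ Finset.range (n+1), ψ k * e (n-k)) * z^n) (W z - c₀) := by
      intro z hz
      have := rep_mul hrepΨ hrepD z hz
      rwa [hprod z hz] at this
    exact fun n => congrFun (rep_unique hmulrep hrepWc) n
  have hcc : (starRingEnd ℂ) c₀ * c₀ = ((‖c₀‖^2 : ℝ) : ℂ) := by
    rw [mul_comm, Complex.mul_conj, Complex.normSq_eq_norm_sq]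
  have he0 : e 0 = 1 - ((‖c₀‖^2 : ℝ) : ℂ) := by
    simp only [hedef, hC0, hcc]
    norm_num
  have hsqlt : ‖c₀‖^2 < 1 := by nlinarith [norm_nonneg c₀]
  have he0ne : e 0 ≠ 0 := by
    rw [he0]
    intro hc
    have h4 : ((‖c₀‖^2 : ℝ):ℂ) = 1 := by linear_combination -hc
    have h5 : (‖c₀‖^2 : ℝ) = 1 := by exact_mod_cast h4
    linarith
  have hψlow : ∀ j, j < m → ψ j = 0 := by
    intro j
    induction j using Nat.strong_induction_on with
    | _ j ih =>
      intro hjm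
      rcases Nat.eq_zero_or_pos j with rfl | hj
      · exact hψ0
      · have h1 := hconv j
        rw [Finset.sum_range_succ] at h1
        have h2 : ∑ k ∈ Finset.range j, ψ k * e (j - k) = 0 :=
          Finset.sum_eq_zero fun k hk => by
            rw [ih k (Finset.mem_range.mp hk) (lt_trans (Finset.mem_range.mp hk) hjm), zero_mul]
        rw [h2, zero_add, Nat.sub_self] at h1
        have h3 : C' j = 0 := by
          simp only [hC'def, if_neg hj.ne']
          rw [hCmid j hj hjm, sub_zero]
        rw [h3] at h1
        exact (mul_eq_zero.mp h1).resolve_right he0ne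
  have hfin := hconv m
  rw [Finset.sum_range_succ, Nat.sub_self] at hfin
  have h2 : ∑ k ∈ Finset.range m, ψ k * e (m - k) = 0 :=
    Finset.sum_eq_zero fun k hk => by rw [hψlow k (Finset.mem_range.mp hk), zero_mul]
  rw [h2, zero_add] at hfin
  have h3 : C' m = tc w m := by
    simp only [hC'def, if_neg hmne, hCm, sub_zero]
  rw [h3] at hfin
  rw [← hfin, norm_mul, he0]
  have hψm : ‖ψ m‖ ≤ 1 := tc_norm_le hΨd (fun z hz => (hΨlt z hz).le) m
  have hee : ‖(1:ℂ) - ((‖c₀‖^2:ℝ):ℂ)‖ = 1 - ‖c₀‖^2 := by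
    rw [show (1:ℂ) - ((‖c₀‖^2:ℝ):ℂ) = (((1 - ‖c₀‖^2 : ℝ)):ℂ) by push_cast; ring,
      Complex.norm_real, Real.norm_eq_abs, _root_.abs_of_nonneg (by linarith)]
  rw [hee]
  calc ‖ψ m‖ * (1 - ‖c₀‖^2) ≤ 1 * (1 - ‖c₀‖^2) := by
        have : (0:ℝ) ≤ 1 - ‖c₀‖^2 := by linarith
        gcongr
    _ = 1 - ‖c₀‖^2 := one_mul _

end BnAux

namespace BnAux

lemma eball_one : Metric.eball (0:ℂ) 1 = ball (0:ℂ) 1 := by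
  rw [show (1 : ENNReal) = ((1:NNReal) : ENNReal) from rfl, Metric.eball_coe]
  norm_num

lemma rep_diffOn {f : ℂ → ℂ} {a : ℕ → ℂ}
    (hf : ∀ z ∈ ball (0 : ℂ) 1, HasSum (fun n : ℕ => a n * z ^ n) (f z)) :
    DifferentiableOn ℂ f (ball (0:ℂ) 1) := by
  have := (rep_hasFPS hf).differentiableOn
  rwa [eball_one] at this

lemma rep_deriv_diffOn {f : ℂ → ℂ} {a : ℕ → ℂ}
    (hf : ∀ z ∈ ball (0 : ℂ) 1, HasSum (fun n : ℕ => a n * z ^ n) (f z)) :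
    DifferentiableOn ℂ (deriv f) (ball (0:ℂ) 1) := by
  have han : AnalyticOnNhd ℂ f (ball (0:ℂ) 1) := by
    intro z hz
    refine (rep_hasFPS hf).analyticAt_of_mem ?_
    rwa [eball_one]
  exact han.deriv.differentiableOn

lemma rep_at_zero {f : ℂ → ℂ} {a : ℕ → ℂ}
    (hf : ∀ z ∈ ball (0 : ℂ) 1, HasSum (fun n : ℕ => a n * z ^ n) (f z)) :
    f 0 = a 0 := by
  have h1 := hf 0 (mem_ball_self one_pos)
  have h2 : HasSum (fun n : ℕ => a n * (0:ℂ) ^ n) (a 0) := by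
    refine (hasSum_ite_eq (0:ℕ) (a 0)).congr_fun (fun n => ?_)
    by_cases hn : n = 0 <;> simp [hn]
  exact h1.unique h2

end BnAux

open BnAux in
theorem bn_bound
    (α β δ : ℝ) (hα0 : 0 ≤ α) (hα1 : α < 1) (hβ0 : 0 ≤ β) (hβ1 : β < 1)
    (hδ : 0 ≤ δ)
    (h g w : ℂ → ℂ) (a b : ℕ → ℂ)
    (ha0 : a 0 = 0) (ha1 : a 1 = 1) (hb0 : b 0 = 0)
    (hreph : ∀ z ∈ ball (0 : ℂ) 1, HasSum (fun n : ℕ => a n * z ^ n) (h z))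
    (hrepg : ∀ z ∈ ball (0 : ℂ) 1, HasSum (fun n : ℕ => b n * z ^ n) (g z))
    (hsb : Summable fun n : ℕ =>
      ((n : ℝ) + 2) ^ δ * (((n : ℝ) + 2 - α) / (1 - α)) * ‖a (n + 2)‖)
    (hcoef : ∑' n : ℕ,
      ((n : ℝ) + 2) ^ δ * (((n : ℝ) + 2 - α) / (1 - α)) * ‖a (n + 2)‖ ≤ 1)
    (hw : DifferentiableOn ℂ w (ball (0 : ℂ) 1))
    (hwlt : ∀ z ∈ ball (0 : ℂ) 1, ‖w z‖ < 1)
    (hdil : ∀ z ∈ ball (0 : ℂ) 1, deriv g z = w z * deriv h z)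
    (hβ : ‖b 1‖ = β) :
    ∀ n : ℕ, 3 ≤ n →
      ‖b n‖ ≤ (1 - α) * (1 - β ^ 2) / (n : ℝ) *
          (∑ k ∈ Finset.Icc 1 (n - 1), (k : ℝ) ^ (1 - δ) / ((k : ℝ) - α)) +
        (1 - α) * β / ((n : ℝ) ^ δ * ((n : ℝ) - α)) := by
  intro n hn3
  have hα' : (0:ℝ) < 1 - α := by linarith
  have hhd := rep_diffOn hreph
  have hgd := rep_diffOn hrepg
  have hun_a : a = tc h := rep_unique hreph (rep_tc hhd)
  have hun_b : b = tc g := rep_unique hrepg (rep_tc hgd)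
  have hhd' := rep_deriv_diffOn hreph
  have hgd' := rep_deriv_diffOn hrepg
  have hrepdh : ∀ z ∈ ball (0:ℂ) 1,
      HasSum (fun k : ℕ => (((k:ℂ)+1) * a (k+1)) * z ^ k) (deriv h z) := by
    intro z hz
    refine (rep_tc hhd' z hz).congr_fun (fun k => ?_)
    rw [tc_deriv, hun_a]
  have hrepdg : ∀ z ∈ ball (0:ℂ) 1,
      HasSum (fun k : ℕ => (((k:ℂ)+1) * b (k+1)) * z ^ k) (deriv g z) := by
    intro z hz
    refine (rep_tc hgd' z hz).congr_fun (fun k => ?_)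
    rw [tc_deriv, hun_b]
  have hprodrep : ∀ z ∈ ball (0:ℂ) 1, HasSum
      (fun k : ℕ => (∑ j ∈ Finset.range (k+1),
        tc w j * (((((k-j : ℕ)):ℂ)+1) * a ((k-j)+1))) * z ^ k) (deriv g z) := by
    intro z hz
    have := rep_mul (rep_tc hw) hrepdh z hz
    rwa [← hdil z hz] at this
  have hid : ∀ k : ℕ, ((k:ℂ)+1) * b (k+1) = ∑ j ∈ Finset.range (k+1),
      tc w j * (((((k-j : ℕ)):ℂ)+1) * a ((k-j)+1)) :=
    fun k => congrFun (rep_unique hrepdg hprodrep) k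
  -- w 0 = b 1
  have hdh0 : deriv h 0 = 1 := by
    rw [rep_at_zero hrepdh]
    simp [ha1]
  have hdg0 : deriv g 0 = b 1 := by
    rw [rep_at_zero hrepdg]
    simp
  have hb1 : b 1 = w 0 := by
    have := hdil 0 (mem_ball_self one_pos)
    rw [hdg0, hdh0, mul_one] at this
    exact this
  have hc0β : ‖tc w 0‖ = β := by rw [tc_zero, ← hb1, hβ]
  have hschwarz : ∀ j : ℕ, 1 ≤ j → ‖tc w j‖ ≤ 1 - β^2 := by
    intro j hj
    have := tc_schwarz_pick hw hwlt hj
    rwa [← hb1, hβ] at this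
  -- coefficient bound for a
  have hak : ∀ k : ℕ, 2 ≤ k → ‖a k‖ ≤ (1 - α) / ((k:ℝ)^δ * ((k:ℝ) - α)) := by
    intro k hk
    obtain ⟨i, rfl⟩ : ∃ i, k = i + 2 := ⟨k - 2, by omega⟩
    have hterm := Summable.le_tsum hsb i (fun j _ => by
      have h1 : (0:ℝ) ≤ ((j:ℝ)+2)^δ := Real.rpow_nonneg (by positivity) δ
      have h2 : (0:ℝ) ≤ ((j:ℝ)+2-α)/(1-α) := div_nonneg (by linarith) hα'.le
      positivity)
    have hterm1 := hterm.trans hcoef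
    have hX : (0:ℝ) < ((i:ℝ)+2)^δ := Real.rpow_pos_of_pos (by positivity) δ
    have hY : (0:ℝ) < (i:ℝ)+2-α := by linarith
    have hre : ((i:ℝ)+2)^δ * (((i:ℝ)+2-α)/(1-α)) * ‖a (i+2)‖
        = ((i:ℝ)+2)^δ * ((i:ℝ)+2-α) * ‖a (i+2)‖ / (1-α) := by ring
    rw [hre, div_le_one hα'] at hterm1
    have hcast : (((i+2:ℕ)):ℝ) = (i:ℝ)+2 := by push_cast; ring
    rw [hcast, le_div_iff₀ (by positivity)]
    calc ‖a (i+2)‖ * (((i:ℝ)+2)^δ * ((i:ℝ)+2-α))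
        = ((i:ℝ)+2)^δ * ((i:ℝ)+2-α) * ‖a (i+2)‖ := by ring
      _ ≤ 1 - α := hterm1
  
  have hterm2 : ∀ i : ℕ, 1 ≤ i → (i:ℝ) * ‖a i‖ ≤ (1-α) * (i:ℝ)^(1-δ) / ((i:ℝ)-α) := by
    intro i hi
    rcases eq_or_lt_of_le hi with h1 | h2
    · rw [← h1]
      simp only [Nat.cast_one, ha1, norm_one, mul_one, Real.one_rpow]
      rw [div_self hα'.ne']
    · have hi2 : 2 ≤ i := h2
      have hipos : (0:ℝ) < i := by exact_mod_cast Nat.lt_of_lt_of_le Nat.zero_lt_one hi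
      have h3 := hak i hi2
      have hδne : ((i:ℝ))^δ ≠ 0 := (Real.rpow_pos_of_pos hipos δ).ne'
      have hiα : (0:ℝ) < (i:ℝ) - α := by
        have : (2:ℝ) ≤ i := by exact_mod_cast hi2
        linarith
      have hrw : (i:ℝ)^(1-δ) = (i:ℝ) / (i:ℝ)^δ := by
        rw [Real.rpow_sub hipos, Real.rpow_one]
      calc (i:ℝ) * ‖a i‖ ≤ (i:ℝ) * ((1-α)/((i:ℝ)^δ*((i:ℝ)-α))) :=
            mul_le_mul_of_nonneg_left h3 hipos.le
        _ = (1-α) * (i:ℝ)^(1-δ) / ((i:ℝ)-α) := by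
            rw [hrw]; field_simp
  obtain ⟨N, rfl⟩ : ∃ N, n = N + 1 := ⟨n - 1, by omega⟩
  have hN2 : 2 ≤ N := by omega
  have hNpos : (0:ℝ) < (N:ℝ) + 1 := by positivity
  have hnorm1 : ((N:ℝ)+1) * ‖b (N+1)‖
      ≤ β * (((N:ℝ)+1) * ‖a (N+1)‖)
        + (1-β^2) * ∑ j ∈ Finset.range N, (((j+1:ℕ)):ℝ) * ‖a (j+1)‖ := by
    have e1 : ((N:ℝ)+1) * ‖b (N+1)‖ = ‖(((N:ℕ):ℂ)+1) * b (N+1)‖ := by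
      rw [norm_mul]
      congr 1
      rw [show (((N:ℕ):ℂ)+1) = (((N+1:ℕ)):ℂ) by push_cast; ring, Complex.norm_natCast]
      push_cast; ring
    rw [e1, hid N]
    calc ‖∑ j ∈ Finset.range (N+1), tc w j * (((((N-j : ℕ)):ℂ)+1) * a ((N-j)+1))‖
        ≤ ∑ j ∈ Finset.range (N+1), ‖tc w j * (((((N-j : ℕ)):ℂ)+1) * a ((N-j)+1))‖ :=
          norm_sum_le _ _
      _ = (∑ j ∈ Finset.range N, ‖tc w (j+1) * (((((N-(j+1) : ℕ)):ℂ)+1) * a ((N-(j+1))+1))‖)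
          + ‖tc w 0 * (((((N-0 : ℕ)):ℂ)+1) * a ((N-0)+1))‖ :=
          Finset.sum_range_succ' _ N
      _ ≤ (∑ j ∈ Finset.range N, (1-β^2) * ((((N-j:ℕ)):ℝ) * ‖a (N-j)‖))
          + β * (((N:ℝ)+1) * ‖a (N+1)‖) := by
          refine add_le_add (Finset.sum_le_sum (fun j hj => ?_)) ?_
          · have hjN : j < N := Finset.mem_range.mp hj
            have hidx : N - (j+1) + 1 = N - j := by omega
            have hidx2 : ((((N-(j+1) : ℕ)):ℂ)+1) = (((N-j:ℕ)):ℂ) := by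
              rw [← hidx]; push_cast; ring
            rw [hidx, hidx2, norm_mul, norm_mul, Complex.norm_natCast]
            have hb := hschwarz (j+1) (by omega)
            have hnn : (0:ℝ) ≤ (((N-j:ℕ)):ℝ) * ‖a (N-j)‖ := by positivity
            exact mul_le_mul_of_nonneg_right hb hnn
          · refine le_of_eq ?_
            simp only [Nat.sub_zero]
            rw [norm_mul, hc0β, norm_mul,
              show (((N:ℕ):ℂ)+1) = (((N+1:ℕ)):ℂ) by push_cast; ring, Complex.norm_natCast]
            push_cast; ring
      _ = (1-β^2) * (∑ j ∈ Finset.range N, (((j+1:ℕ)):ℝ) * ‖a (j+1)‖)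
          + β * (((N:ℝ)+1) * ‖a (N+1)‖) := by
          congr 1
          rw [Finset.mul_sum,
            ← Finset.sum_range_reflect (fun j => (1-β^2) * ((((j+1:ℕ)):ℝ) * ‖a (j+1)‖)) N]
          refine Finset.sum_congr rfl (fun j hj => ?_)
          have hjN : j < N := Finset.mem_range.mp hj
          have hidx : N - 1 - j + 1 = N - j := by omega
          rw [hidx]
      _ = β * (((N:ℝ)+1) * ‖a (N+1)‖)
          + (1-β^2) * ∑ j ∈ Finset.range N, (((j+1:ℕ)):ℝ) * ‖a (j+1)‖ := add_comm _ _
  have hpiece1 : ‖a (N+1)‖ ≤ (1-α) / ((((N:ℝ)+1))^δ * (((N:ℝ)+1) - α)) := by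
    have := hak (N+1) (by omega)
    rwa [show (((N+1:ℕ)):ℝ) = (N:ℝ)+1 by push_cast; ring] at this
  have hpiece2 : ∑ j ∈ Finset.range N, (((j+1:ℕ)):ℝ) * ‖a (j+1)‖
      ≤ (1-α) * ∑ k ∈ Finset.Icc 1 N, (k:ℝ)^(1-δ)/((k:ℝ)-α) := by
    have hIcc : ∑ k ∈ Finset.Icc 1 N, (k:ℝ)^(1-δ)/((k:ℝ)-α)
        = ∑ j ∈ Finset.range N, (((1+j:ℕ)):ℝ)^(1-δ)/((((1+j:ℕ)):ℝ)-α) := by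
      rw [← Finset.Ico_add_one_right_eq_Icc, Finset.sum_Ico_eq_sum_range]
      norm_num
    rw [hIcc, Finset.mul_sum]
    refine Finset.sum_le_sum (fun j hj => ?_)
    have h2 := hterm2 (j+1) (by omega)
    rw [show 1+j = j+1 from by omega]
    calc (((j+1:ℕ)):ℝ) * ‖a (j+1)‖
        ≤ (1-α) * (((j+1:ℕ)):ℝ)^(1-δ) / ((((j+1:ℕ)):ℝ)-α) := h2
      _ = (1-α) * ((((j+1:ℕ)):ℝ)^(1-δ)/((((j+1:ℕ)):ℝ)-α)) := by ring
  have hβsq : (0:ℝ) ≤ 1 - β^2 := by nlinarith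
  have hfinal : ((N:ℝ)+1) * ‖b (N+1)‖
      ≤ β * (((N:ℝ)+1) * ((1-α) / ((((N:ℝ)+1))^δ * (((N:ℝ)+1) - α))))
        + (1-β^2) * ((1-α) * ∑ k ∈ Finset.Icc 1 N, (k:ℝ)^(1-δ)/((k:ℝ)-α)) := by
    refine hnorm1.trans (add_le_add ?_ ?_)
    · exact mul_le_mul_of_nonneg_left (mul_le_mul_of_nonneg_left hpiece1 hNpos.le) hβ0
    · exact mul_le_mul_of_nonneg_left hpiece2 hβsq
  have hsub1 : (N+1) - 1 = N := by omega
  rw [hsub1]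
  push_cast
  refine le_of_mul_le_mul_left ?_ hNpos
  have hXne : (((N:ℝ)+1))^δ ≠ 0 := (Real.rpow_pos_of_pos hNpos δ).ne'
  have hYne : ((N:ℝ)+1) - α ≠ 0 := by
    have : (2:ℝ) ≤ (N:ℝ) := by exact_mod_cast hN2
    intro hc; nlinarith
  refine hfinal.trans (le_of_eq ?_)
  field_simp
  ring
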